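/- Let G be a finite simple graph on n ≥ 2 vertices with m edges such that 0 < m and 2m < n(n−1). Then the normalised degree variance of G equals that of its complement: v̄(G) = v̄(Ĝ). -/

import Mathlib

/-- The degree variance of a finite simple graph `G` on `n` vertices with `m` edges:
`v(G) = (1/(n-1)) · ∑ i, (k_i - 2m/n)^2`. -/
noncomputable def degVar {n : ℕ} (G : SimpleGraph (Fin n)) [DecidableRel G.Adj] : ℝ :=
  (1 / ((n : ℝ) - 1)) *
    ∑ i, ((G.degree i : ℝ) - 2 * (G.edgeFinset.card : ℝ) / n) ^ 2

/-- The normalised degree variance `v̄(G) = ((n-1)/(n·m·(1-d))) · v(G)`, where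
`d = 2m/(n(n-1))` is the density. -/
noncomputable def normDegVar {n : ℕ} (G : SimpleGraph (Fin n)) [DecidableRel G.Adj] : ℝ :=
  ((n : ℝ) - 1) /
      ((n : ℝ) * (G.edgeFinset.card : ℝ) *
        (1 - 2 * (G.edgeFinset.card : ℝ) / ((n : ℝ) * ((n : ℝ) - 1)))) *
    degVar G

/-- **Complement invariance of normalised degree variance.**  Let `G` be a finite simple
graph on `n ≥ 2` vertices with `m` edges such that `0 < m` and `2m < n(n-1)`.  Then the
normalised degree variance of `G` equals that of its complement: `v̄(G) = v̄(Ĝ)`. -/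
theorem normDegVar_compl (n : ℕ) (hn : 2 ≤ n) (G : SimpleGraph (Fin n))
    [DecidableRel G.Adj] (m : ℕ) (hm : m = G.edgeFinset.card)
    (hm0 : 0 < m) (hd : 2 * m < n * (n - 1)) :
    normDegVar G = normDegVar Gᶜ := by
  classical
  have hn0 : (n : ℝ) ≠ 0 := by positivity
  have hn1 : (n : ℝ) - 1 ≠ 0 := by
    have : (2 : ℝ) ≤ n := by exact_mod_cast hn
    nlinarith
  -- degrees of the complement
  have hdeg : ∀ i, (Gᶜ.degree i : ℝ) = (n : ℝ) - 1 - (G.degree i : ℝ) := by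
    intro i
    have h1 : Gᶜ.degree i = Fintype.card (Fin n) - 1 - G.degree i :=
      SimpleGraph.degree_compl G i
    have h2 : G.degree i ≤ n - 1 := by
      have := SimpleGraph.degree_lt_card_verts (G := G) i
      simp only [Fintype.card_fin] at this
      omega
    have h3 : 1 ≤ n := by omega
    rw [h1]
    simp only [Fintype.card_fin]
    push_cast [Nat.cast_sub h2, Nat.cast_sub h3]
    ring
  -- edge count of complement
  have hsumG : ∑ i, G.degree i = 2 * G.edgeFinset.card :=
    SimpleGraph.sum_degrees_eq_twice_card_edges G
  have hsumGc : ∑ i, Gᶜ.degree i = 2 * Gᶜ.edgeFinset.card :=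
    SimpleGraph.sum_degrees_eq_twice_card_edges Gᶜ
  set a : ℝ := (G.edgeFinset.card : ℝ) with ha
  set b : ℝ := (Gᶜ.edgeFinset.card : ℝ) with hb
  have hab : 2 * b = (n : ℝ) * ((n : ℝ) - 1) - 2 * a := by
    have h1 : (2 : ℝ) * b = ∑ i, (Gᶜ.degree i : ℝ) := by
      rw [hb]; exact_mod_cast (congrArg (Nat.cast : ℕ → ℝ) hsumGc).symm
    have h2 : (2 : ℝ) * a = ∑ i, (G.degree i : ℝ) := by
      rw [ha]; exact_mod_cast (congrArg (Nat.cast : ℕ → ℝ) hsumG).symm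
    rw [h1]
    calc ∑ i, (Gᶜ.degree i : ℝ) = ∑ i : Fin n, ((n : ℝ) - 1 - (G.degree i : ℝ)) := by
          exact Finset.sum_congr rfl fun i _ => hdeg i
      _ = (n : ℝ) * ((n : ℝ) - 1) - ∑ i, (G.degree i : ℝ) := by
          rw [Finset.sum_sub_distrib, Finset.sum_const, Finset.card_univ, Fintype.card_fin]
          ring
      _ = (n : ℝ) * ((n : ℝ) - 1) - 2 * a := by rw [← h2]
  have ha0 : a ≠ 0 := by
    rw [ha]
    have : 0 < G.edgeFinset.card := hm ▸ hm0
    positivity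
  have hb0 : b ≠ 0 := by
    have hcast : 2 * (m : ℝ) < (n : ℝ) * ((n : ℝ) - 1) := by
      have h1 : 1 ≤ n := by omega
      have : ((2 * m : ℕ) : ℝ) < ((n * (n - 1) : ℕ) : ℝ) := by exact_mod_cast hd
      push_cast [Nat.cast_sub h1] at this
      linarith
    have ham : a = (m : ℝ) := by rw [ha, hm]
    have : 0 < b := by nlinarith
    linarith
  -- degVar equality
  have hdv : degVar G = degVar Gᶜ := by
    unfold degVar
    rw [← ha, ← hb]
    congr 1
    apply Finset.sum_congr rfl
    intro i _
    rw [hdeg i]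
    have : (n : ℝ) - 1 - (G.degree i : ℝ) - 2 * b / n = -((G.degree i : ℝ) - 2 * a / n) := by
      field_simp
      linarith [hab]
    rw [this, neg_pow]
    ring
  have hda : (n : ℝ) * a * (1 - 2 * a / ((n : ℝ) * ((n : ℝ) - 1))) = 2 * a * b / ((n : ℝ) - 1) := by
    field_simp
    linear_combination -hab
  have hdb : (n : ℝ) * b * (1 - 2 * b / ((n : ℝ) * ((n : ℝ) - 1))) = 2 * a * b / ((n : ℝ) - 1) := by
    field_simp
    linear_combination -hab
  unfold normDegVar
  rw [← ha, ← hb, ← hdv, hda, hdb]
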